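/- Let f ∈ F_q[x] be a polynomial of degree k with 0 < k < q. If |D_f^{-1} D_f| < q - k + 2, then f is a permutation of F_q. -/

import Mathlib

open Pointwise

variable {F : Type*} [Field F] [Fintype F]

/-- The set of directions determined by the graph of `f`. -/
def dirs (f : F → F) : Set F := {d | ∃ x y : F, x ≠ y ∧ d = (f x - f y) / (x - y)}

/-- The set of inverses of the nonzero elements of `A`. -/
def invSet (A : Set F) : Set F := {b | ∃ a ∈ A, a ≠ 0 ∧ b = a⁻¹}

theorem stmt5 (f : Polynomial F) (k : ℕ) (hk0 : 0 < k) (hkq : k < Fintype.card F)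
    (hdeg : f.natDegree = k)
    (hsize : (invSet (dirs f.eval) * dirs f.eval).ncard < Fintype.card F - k + 2) :
    Function.Bijective f.eval := by
  classical
  rw [← Finite.injective_iff_bijective]
  intro a b hab
  by_contra hne
  replace hab : f.eval a = f.eval b := hab
  set c := f.eval b with hc
  set W := invSet (dirs f.eval) * dirs f.eval with hWdef
  have hD : ∀ x y : F, x ≠ y → (f.eval x - f.eval y) / (x - y) ∈ dirs f.eval :=
    fun x y h => ⟨x, y, h, rfl⟩
  have hndeg : (f - Polynomial.C c).natDegree = k := by
    rw [Polynomial.natDegree_sub_C, hdeg]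
  have hfC : f - Polynomial.C c ≠ 0 := by
    intro h
    rw [h] at hndeg
    simp at hndeg
    omega
  set R := (f - Polynomial.C c).roots.toFinset with hR
  have hRcard : R.card ≤ k :=
    le_trans (Multiset.toFinset_card_le _)
      (le_trans (Polynomial.card_roots' _) (le_of_eq hndeg))
  have hroot : ∀ x : F, f.eval x = c ↔ x ∈ R := by
    intro x
    rw [hR, Multiset.mem_toFinset, Polynomial.mem_roots hfC, Polynomial.IsRoot,
      Polynomial.eval_sub, Polynomial.eval_C, sub_eq_zero]
  set V := Finset.univ \ R with hV
  have hVmem : ∀ x : F, x ∈ V ↔ f.eval x ≠ c := by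
    intro x
    rw [hV, Finset.mem_sdiff]
    simp [hroot x]
  have hVcard : V.card = Fintype.card F - R.card := by
    rw [hV, Finset.card_sdiff_of_subset (Finset.subset_univ R), Finset.card_univ]
  -- basic facts about elements of V
  have hVb : ∀ x ∈ V, x ≠ b := by
    intro x hx hxb
    exact (hVmem x).mp hx (hxb ▸ rfl)
  have hVa : ∀ x ∈ V, x ≠ a := by
    intro x hx hxa
    exact (hVmem x).mp hx (by rw [hxa, hab])
  -- V is nonempty
  have hVpos : 0 < V.card := by omega
  obtain ⟨x₀, hx₀⟩ := Finset.card_pos.mp hVpos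
  -- a nonzero direction
  have hx₀b : x₀ ≠ b := hVb x₀ hx₀
  set e₀ : F := (f.eval x₀ - f.eval b) / (x₀ - b) with he₀
  have he₀D : e₀ ∈ dirs f.eval := hD x₀ b hx₀b
  have he₀ne : e₀ ≠ 0 :=
    div_ne_zero (sub_ne_zero.mpr ((hVmem x₀).mp hx₀)) (sub_ne_zero.mpr hx₀b)
  have he₀inv : e₀⁻¹ ∈ invSet (dirs f.eval) := ⟨e₀, he₀D, he₀ne, rfl⟩
  -- 0 ∈ W
  have h0D : (0 : F) ∈ dirs f.eval := by
    have := hD a b hne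
    rwa [hab, sub_self, zero_div] at this
  have h0W : (0 : F) ∈ W := by
    rw [hWdef]
    exact ⟨e₀⁻¹, he₀inv, 0, h0D, mul_zero _⟩
  -- 1 ∈ W
  have h1W : (1 : F) ∈ W := by
    rw [hWdef]
    exact ⟨e₀⁻¹, he₀inv, e₀, he₀D, inv_mul_cancel₀ he₀ne⟩
  -- the Möbius map
  set φ : F → F := fun x => (x - b) / (x - a) with hφ
  have hφW : ∀ x ∈ V, φ x ∈ W := by
    intro x hx
    have hxb : x ≠ b := hVb x hx
    have hxa : x ≠ a := hVa x hx
    have hval : f.eval x - f.eval b ≠ 0 := sub_ne_zero.mpr ((hVmem x).mp hx)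
    set e : F := (f.eval x - f.eval b) / (x - b) with he
    have heD : e ∈ dirs f.eval := hD x b hxb
    have hene : e ≠ 0 := div_ne_zero hval (sub_ne_zero.mpr hxb)
    refine ⟨e⁻¹, ⟨e, heD, hene, rfl⟩, (f.eval x - f.eval a) / (x - a), hD x a hxa, ?_⟩
    rw [he, hab]
    have h1 : x - b ≠ 0 := sub_ne_zero.mpr hxb
    have h2 : x - a ≠ 0 := sub_ne_zero.mpr hxa
    field_simp [hφ]
    simp only [hφ]
    rw [mul_div_assoc', eq_div_iff h2, hc]
    ring
  have hφ0 : ∀ x ∈ V, φ x ≠ 0 := by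
    intro x hx
    exact div_ne_zero (sub_ne_zero.mpr (hVb x hx)) (sub_ne_zero.mpr (hVa x hx))
  have hφ1 : ∀ x ∈ V, φ x ≠ 1 := by
    intro x hx h1
    rw [hφ] at h1
    rw [div_eq_one_iff_eq (sub_ne_zero.mpr (hVa x hx))] at h1
    exact hne (by linear_combination h1)
  have hφinj : Set.InjOn φ V := by
    intro x hx y hy hxy
    have hxa : x - a ≠ 0 := sub_ne_zero.mpr (hVa x hx)
    have hya : y - a ≠ 0 := sub_ne_zero.mpr (hVa y hy)
    rw [hφ] at hxy
    simp only at hxy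
    rw [div_eq_div_iff hxa hya] at hxy
    have h2 : (a - b) * (y - x) = 0 := by linear_combination hxy
    rcases mul_eq_zero.mp h2 with h | h
    · exact absurd (sub_eq_zero.mp h) hne
    · exact (sub_eq_zero.mp h).symm
  -- assemble finset
  set T : Finset F := insert (0 : F) (insert (1 : F) (V.image φ)) with hT
  have h1nimg : (1 : F) ∉ V.image φ := by
    intro h
    obtain ⟨x, hx, hxe⟩ := Finset.mem_image.mp h
    exact hφ1 x hx hxe
  have h0nins : (0 : F) ∉ insert (1 : F) (V.image φ) := by
    intro h
    rcases Finset.mem_insert.mp h with h | h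
    · exact one_ne_zero h.symm
    · obtain ⟨x, hx, hxe⟩ := Finset.mem_image.mp h
      exact hφ0 x hx hxe
  have hTcard : T.card = V.card + 2 := by
    rw [hT, Finset.card_insert_of_notMem h0nins, Finset.card_insert_of_notMem h1nimg,
      Finset.card_image_of_injOn hφinj]
  have hTsub : (↑T : Set F) ⊆ W := by
    intro w hw
    simp only [hT, Finset.coe_insert, Set.mem_insert_iff, Finset.mem_coe] at hw
    rcases hw with rfl | rfl | hw
    · exact h0W
    · exact h1W
    · obtain ⟨x, hx, hxe⟩ := Finset.mem_image.mp hw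
      exact hxe ▸ hφW x hx
  have hle : T.card ≤ W.ncard := by
    have := Set.ncard_le_ncard hTsub (Set.toFinite W)
    rwa [Set.ncard_coe_finset] at this
  omega
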